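/- For every δ > 0 and σ > 0 and all x ∈ ℝ: φ((x-δ)/σ)·Φ(x/σ) > Φ((x-δ)/σ)·φ(x/σ), where Φ and φ are the standard normal CDF and PDF. -/

import Mathlib

open MeasureTheory Real Set

/-- Standard normal PDF. -/
noncomputable def stdPdf (x : ℝ) : ℝ := Real.exp (-(x ^ 2) / 2) / Real.sqrt (2 * Real.pi)

/-- Standard normal CDF. -/
noncomputable def stdCdf (x : ℝ) : ℝ := ∫ t in Set.Iic x, stdPdf t

lemma stdPdf_pos (x : ℝ) : 0 < stdPdf x :=
  div_pos (Real.exp_pos _) (Real.sqrt_pos.2 (by positivity))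

lemma integrable_stdPdf : Integrable stdPdf := by
  have h : Integrable (fun x : ℝ => Real.exp (-(1/2 : ℝ) * x ^ 2)) :=
    integrable_exp_neg_mul_sq (by norm_num)
  refine (h.div_const (Real.sqrt (2 * Real.pi))).congr ?_
  filter_upwards with x
  simp [stdPdf]
  ring_nf

lemma shift_eq (b c : ℝ) : ∫ t in Iic b, stdPdf t = ∫ t in Iic (b - c), stdPdf (t + c) := by
  have hemb : MeasurableEmbedding (fun t : ℝ => t + c) :=
    (MeasurableEquiv.addRight c).measurableEmbedding
  have hmap : Measure.map (fun t : ℝ => t + c) volume = volume :=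
    map_add_right_eq_self volume c
  have h := hemb.setIntegral_map (μ := volume) stdPdf (Iic b)
  rw [hmap] at h
  rw [h]
  congr 1
  ext t
  simp [le_sub_iff_add_le]

lemma key_lt {a c t : ℝ} (hc : 0 < c) (ht : t < a) :
    stdPdf (a + c) * stdPdf t < stdPdf a * stdPdf (t + c) := by
  unfold stdPdf
  rw [div_mul_div_comm, div_mul_div_comm, ← Real.exp_add, ← Real.exp_add]
  have hs : 0 < Real.sqrt (2 * Real.pi) * Real.sqrt (2 * Real.pi) := by
    have := Real.sqrt_pos.2 (by positivity : (0:ℝ) < 2 * Real.pi); positivity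
  rw [div_lt_div_iff_of_pos_right hs]
  apply Real.exp_lt_exp.2
  nlinarith [sq_nonneg (a - t)]

lemma key_le {a c t : ℝ} (hc : 0 < c) (ht : t ≤ a) :
    stdPdf (a + c) * stdPdf t ≤ stdPdf a * stdPdf (t + c) := by
  rcases ht.lt_or_eq with h | rfl
  · exact (key_lt hc h).le
  · rw [mul_comm]

theorem pdf_cdf_cross_ineq (δ σ : ℝ) (hδ : 0 < δ) (hσ : 0 < σ) (x : ℝ) :
    stdPdf ((x - δ) / σ) * stdCdf (x / σ) > stdCdf ((x - δ) / σ) * stdPdf (x / σ) := by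
  set a : ℝ := (x - δ) / σ with ha
  set c : ℝ := δ / σ with hcdef
  have hc : 0 < c := div_pos hδ hσ
  have hb : x / σ = a + c := by rw [ha, hcdef, ← add_div]; ring_nf
  have hcdf : stdCdf (a + c) = ∫ t in Iic a, stdPdf (t + c) := by
    rw [stdCdf, shift_eq (a + c) c, add_sub_cancel_right]
  have hint1 : IntegrableOn (fun t => stdPdf a * stdPdf (t + c)) (Iic a) volume :=
    ((integrable_stdPdf.comp_add_right c).const_mul _).integrableOn
  have hint2 : IntegrableOn (fun t => stdPdf (a + c) * stdPdf t) (Iic a) volume :=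
    (integrable_stdPdf.const_mul _).integrableOn
  rw [gt_iff_lt, ← sub_pos, hb, hcdf, stdCdf, mul_comm (∫ t in Iic a, stdPdf t),
    ← MeasureTheory.integral_const_mul, ← MeasureTheory.integral_const_mul, ← integral_sub hint1 hint2]
  set g : ℝ → ℝ := fun t => stdPdf a * stdPdf (t + c) - stdPdf (a + c) * stdPdf t with hg
  have hnn : 0 ≤ᵐ[volume.restrict (Iic a)] g :=
    (ae_restrict_iff' measurableSet_Iic).2 (Filter.Eventually.of_forall
      fun t ht => sub_nonneg.2 (key_le hc ht))
  rw [setIntegral_pos_iff_support_of_nonneg_ae hnn (hint1.sub hint2)]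
  have hsub : Iio a ⊆ Function.support g ∩ Iic a := fun t ht =>
    ⟨(sub_pos.2 (key_lt hc (mem_Iio.1 ht))).ne', le_of_lt (mem_Iio.1 ht)⟩
  have : volume (Iio a) ≤ volume (Function.support g ∩ Iic a) := measure_mono hsub
  rw [Real.volume_Iio] at this
  exact lt_of_lt_of_le (by simp) this
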